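/- Let Ω be a symmetric positive definite m × m real matrix with induced inner product ⟨x, y⟩_Ω = xᵀΩy, let S ⊆ ℝ^m be a finite set, let C be the convex cone generated by S, and let C̃ ⊆ C be a closed convex cone. Let π ∈ ℝ^m and let η̃ be the point of C̃ minimizing ⟨π − η, π − η⟩_Ω over η ∈ C̃. If ⟨π − η̃, a − η̃⟩_Ω ≤ 0 for every a ∈ S, then η̃ also minimizes ⟨π − η, π − η⟩_Ω over η ∈ C; in particular, the minimum of the Ω-distance squared from π over C equals its minimum over C̃. -/

import Mathlib

open Matrix

/-- The inner product on `ℝ^m` induced by the positive definite matrix `Ω`. -/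
def innOmega {m : ℕ} (Ω : Matrix (Fin m) (Fin m) ℝ) (x y : Fin m → ℝ) : ℝ :=
  x ⬝ᵥ Ω.mulVec y

/-- The convex cone generated by a set `S ⊆ ℝ^m`: all finite nonnegative linear
combinations of elements of `S`. -/
def genCone {m : ℕ} (S : Set (Fin m → ℝ)) : Set (Fin m → ℝ) :=
  {x | ∃ (n : ℕ) (v : Fin n → Fin m → ℝ) (t : Fin n → ℝ),
    (∀ i, v i ∈ S) ∧ (∀ i, 0 ≤ t i) ∧ x = ∑ i, t i • v i}


section Helpers
variable {m : ℕ} (Ω : Matrix (Fin m) (Fin m) ℝ)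

lemma innOmega_symm (hsym : Ω.IsSymm) (x y : Fin m → ℝ) :
    innOmega Ω x y = innOmega Ω y x := by
  unfold innOmega
  rw [Matrix.dotProduct_mulVec, ← Matrix.mulVec_transpose, hsym.eq, dotProduct_comm]

lemma innOmega_nonneg (hpos : Ω.PosDef) (x : Fin m → ℝ) : 0 ≤ innOmega Ω x x := by
  have := hpos.posSemidef.dotProduct_mulVec_nonneg x
  simpa [innOmega] using this

lemma innOmega_pos (hpos : Ω.PosDef) {x : Fin m → ℝ} (hx : x ≠ 0) :
    0 < innOmega Ω x x := by
  have := hpos.dotProduct_mulVec_pos hx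
  simpa [innOmega] using this

lemma innOmega_sub_right (x y z : Fin m → ℝ) :
    innOmega Ω x (y - z) = innOmega Ω x y - innOmega Ω x z := by
  simp [innOmega, Matrix.mulVec_sub, dotProduct_sub]

lemma innOmega_sub_left (x y z : Fin m → ℝ) :
    innOmega Ω (y - z) x = innOmega Ω y x - innOmega Ω z x := by
  simp [innOmega, sub_dotProduct]

lemma innOmega_smul_right (t : ℝ) (x y : Fin m → ℝ) :
    innOmega Ω x (t • y) = t * innOmega Ω x y := by
  simp [innOmega, Matrix.mulVec_smul, dotProduct_smul, smul_eq_mul]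

lemma innOmega_smul_left (t : ℝ) (x y : Fin m → ℝ) :
    innOmega Ω (t • x) y = t * innOmega Ω x y := by
  simp [innOmega, smul_dotProduct, smul_eq_mul]

lemma innOmega_zero_right (x : Fin m → ℝ) : innOmega Ω x 0 = 0 := by
  simp [innOmega]

lemma innOmega_sum_right {n : ℕ} (x : Fin m → ℝ) (w : Fin n → Fin m → ℝ) :
    innOmega Ω x (∑ i, w i) = ∑ i, innOmega Ω x (w i) := by
  unfold innOmega
  induction' (Finset.univ : Finset (Fin n)) using Finset.induction with a s ha ih
  · simp
  · simp [Finset.sum_insert ha, Matrix.mulVec_add, dotProduct_add, ih]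

lemma innOmega_expand (hsym : Ω.IsSymm) (p e c : Fin m → ℝ) :
    innOmega Ω (p - c) (p - c) =
      innOmega Ω (p - e) (p - e) - 2 * innOmega Ω (p - e) (c - e)
        + innOmega Ω (c - e) (c - e) := by
  have h : p - c = (p - e) - (c - e) := by abel
  have s1 := innOmega_symm Ω hsym p e
  have s2 := innOmega_symm Ω hsym p c
  have s3 := innOmega_symm Ω hsym e c
  rw [h]
  simp only [innOmega_sub_left, innOmega_sub_right]
  linarith

end Helpers

/-- let `S` be finite, `C = genCone S`, and let `Ct ⊆ C` be a closed convex
cone with `η` the `Ω`-projection of `π` onto `Ct`. If `⟨π − η, a − η⟩_Ω ≤ 0` for every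
`a ∈ S`, then `η` also minimizes the `Ω`-distance squared from `π` over `C`; in particular
the minimum over `C` equals the minimum over `Ct`. -/
theorem pricing_termination {m : ℕ}
    (Ω : Matrix (Fin m) (Fin m) ℝ) (hsym : Ω.IsSymm) (hpos : Ω.PosDef)
    (S : Set (Fin m → ℝ)) (hS : S.Finite)
    (Ct : Set (Fin m → ℝ)) (hsub : Ct ⊆ genCone S)
    (hclosed : IsClosed Ct) (hconv : Convex ℝ Ct)
    (hcone : ∀ x ∈ Ct, ∀ t : ℝ, 0 ≤ t → t • x ∈ Ct)
    (π η : Fin m → ℝ) (hη : η ∈ Ct)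
    (hmin : ∀ c ∈ Ct, innOmega Ω (π - η) (π - η) ≤ innOmega Ω (π - c) (π - c))
    (hprice : ∀ a ∈ S, innOmega Ω (π - η) (a - η) ≤ 0) :
    (∀ c ∈ genCone S, innOmega Ω (π - η) (π - η) ≤ innOmega Ω (π - c) (π - c)) ∧
      sInf {q : ℝ | ∃ x ∈ genCone S, q = innOmega Ω (π - x) (π - x)} =
        sInf {q : ℝ | ∃ x ∈ Ct, q = innOmega Ω (π - x) (π - x)} := by
  classical
  have h0 : (0 : Fin m → ℝ) ∈ Ct := by simpa using hcone η hη 0 le_rfl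
  -- orthogonality: ⟨π - η, η⟩ = 0
  have hortho : innOmega Ω (π - η) η = 0 := by
    by_cases hη0 : η = 0
    · simp [hη0, innOmega_zero_right]
    · set a := innOmega Ω η η with ha_def
      set b := innOmega Ω (π - η) η with hb_def
      have ha : 0 < a := innOmega_pos Ω hpos hη0
      have hineq : ∀ s : ℝ, 0 ≤ s → 0 ≤ (s - 1) ^ 2 * a - 2 * (s - 1) * b := by
        intro s hs
        have hmem : s • η ∈ Ct := hcone η hη s hs
        have h1 := hmin (s • η) hmem
        have hdiff : s • η - η = (s - 1) • η := by
          rw [sub_smul, one_smul]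
        have hexp := innOmega_expand Ω hsym π η (s • η)
        rw [hdiff, innOmega_smul_right, innOmega_smul_left, innOmega_smul_right] at hexp
        rw [hexp] at h1
        nlinarith [h1]
      have h1 := hineq 0 le_rfl
      by_cases hb1 : 0 ≤ 1 + b / a
      · have h2 := hineq (1 + b / a) hb1
        have heq : (1 + b / a - 1) ^ 2 * a - 2 * (1 + b / a - 1) * b = -(b ^ 2) / a := by
          field_simp
          ring
        rw [heq] at h2
        have h3 : 0 ≤ -(b ^ 2) := by
          have h4 := mul_nonneg h2 ha.le
          rwa [div_mul_cancel₀ _ (ne_of_gt ha)] at h4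
        nlinarith [sq_nonneg b]
      · exfalso
        push_neg at hb1
        have : b < -a := by
          have := (div_lt_iff₀ ha).mp (by linarith : b / a < -1)
          linarith
        nlinarith [h1]
  -- key: ⟨π - η, c⟩ ≤ 0 for all c in genCone S
  have hkey : ∀ c ∈ genCone S, innOmega Ω (π - η) c ≤ 0 := by
    rintro c ⟨n, v, t, hv, ht, rfl⟩
    rw [innOmega_sum_right]
    apply Finset.sum_nonpos
    intro i _
    rw [innOmega_smul_right]
    have hvi : innOmega Ω (π - η) (v i) ≤ 0 := by
      have := hprice (v i) (hv i)
      rw [innOmega_sub_right, hortho] at this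
      linarith
    exact mul_nonpos_of_nonneg_of_nonpos (ht i) hvi
  -- part 1
  have part1 : ∀ c ∈ genCone S,
      innOmega Ω (π - η) (π - η) ≤ innOmega Ω (π - c) (π - c) := by
    intro c hc
    have hexp := innOmega_expand Ω hsym π η c
    have hcross : innOmega Ω (π - η) (c - η) ≤ 0 := by
      rw [innOmega_sub_right, hortho]
      simpa using hkey c hc
    have hnn : 0 ≤ innOmega Ω (c - η) (c - η) := innOmega_nonneg Ω hpos _
    nlinarith [hexp]
  refine ⟨part1, ?_⟩
  have hA : IsLeast {q : ℝ | ∃ x ∈ genCone S, q = innOmega Ω (π - x) (π - x)}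
      (innOmega Ω (π - η) (π - η)) := by
    constructor
    · exact ⟨η, hsub hη, rfl⟩
    · rintro q ⟨x, hx, rfl⟩
      exact part1 x hx
  have hB : IsLeast {q : ℝ | ∃ x ∈ Ct, q = innOmega Ω (π - x) (π - x)}
      (innOmega Ω (π - η) (π - η)) := by
    constructor
    · exact ⟨η, hη, rfl⟩
    · rintro q ⟨x, hx, rfl⟩
      exact hmin x hx
  rw [hA.csInf_eq, hB.csInf_eq]
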